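/- arXiv:1005.3454 — 3 statements merged into one kernel-verified Lean document; each statement's English description precedes it below -/
import Mathlib

section
/- Let $E=(\alpha,\beta)$ be a bounded interval and let $c:(\alpha,\beta)\to(0,\infty)$ be continuous. Let $\eta\in C^2(\alpha,\beta)$ be strictly positive and strictly concave. If $\int_\alpha^{a}\frac{(x-\alpha)^2}{c(x)}dx = \infty$ for some $a\in(\alpha,\beta)$, then $\inf_{x\in(\alpha,\beta)} \frac{-c(x)\eta''(x)}{2\eta(x)} = 0$. -/
open Set MeasureTheory Filter Topology

/-- Auxiliary lemma: if the quantity `-c η'' / (2η)` is bounded below by a positive `ε`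
on `(α, β)`, then `(x - α)^2 / c x` is integrable on `(α, a)`. -/
lemma aux_integrable (α β : ℝ) (hαβ : α < β) (c η η' η'' : ℝ → ℝ)
    (hc_pos : ∀ x ∈ Ioo α β, 0 < c x) (hc_cont : ContinuousOn c (Ioo α β))
    (hη' : ∀ x ∈ Ioo α β, HasDerivAt η (η' x) x)
    (hη'' : ∀ x ∈ Ioo α β, HasDerivAt η' (η'' x) x)
    (hη_pos : ∀ x ∈ Ioo α β, 0 < η x)
    (hconc : ∀ x ∈ Ioo α β, η'' x < 0)
    (a : ℝ) (ha : a ∈ Ioo α β) (ε : ℝ) (hε0 : 0 < ε)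
    (hε : ∀ x ∈ Ioo α β, ε ≤ -c x * η'' x / (2 * η x)) :
    IntegrableOn (fun x => (x - α) ^ 2 / c x) (Ioo α a) := by
  obtain ⟨haα, haβ⟩ := ha
  have hamem : a ∈ Ioo α β := ⟨haα, haβ⟩
  -- continuity of η and η' on (α, β)
  have hηc : ContinuousOn η (Ioo α β) := fun x hx =>
    ((hη' x hx).continuousAt).continuousWithinAt
  have hη'c : ContinuousOn η' (Ioo α β) := fun x hx =>
    ((hη'' x hx).continuousAt).continuousWithinAt
  -- η' is strictly decreasing on (α, β)
  have hanti : StrictAntiOn η' (Ioo α β) := by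
    apply strictAntiOn_of_deriv_neg (convex_Ioo α β) hη'c
    intro x hx
    rw [isOpen_Ioo.interior_eq] at hx
    rw [(hη'' x hx).deriv]
    exact hconc x hx
  -- tangent-line bound: η' t * (t - α) ≤ η t
  have htan : ∀ t ∈ Ioo α β, η' t * (t - α) ≤ η t := by
    intro t ht
    have key : ∀ s ∈ Ioo α t, η' t * (t - s) ≤ η t := by
      intro s hs
      have hsub : Icc s t ⊆ Ioo α β := fun y hy => ⟨hs.1.trans_le hy.1, hy.2.trans_lt ht.2⟩
      obtain ⟨ξ, hξ, hslope⟩ := exists_hasDerivAt_eq_slope η η' hs.2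
        (hηc.mono hsub) (fun y hy => hη' y (hsub ⟨hy.1.le, hy.2.le⟩))
      have hξmem : ξ ∈ Ioo α β := hsub ⟨hξ.1.le, hξ.2.le⟩
      have h1 : η' t < η' ξ := hanti hξmem ht hξ.2
      have hts : 0 < t - s := sub_pos.2 hs.2
      have h2 : η' ξ * (t - s) = η t - η s := by
        rw [hslope]; field_simp
      have h3 : η' t * (t - s) ≤ η' ξ * (t - s) := by
        exact mul_le_mul_of_nonneg_right h1.le hts.le
      have hηs : 0 < η s := hη_pos s ⟨hs.1, hs.2.trans ht.2⟩
      linarith [h3, h2]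
    have hlim : Tendsto (fun s => η' t * (t - s)) (𝓝[>] α) (𝓝 (η' t * (t - α))) := by
      apply Tendsto.mono_left _ nhdsWithin_le_nhds
      exact (continuous_const.mul (continuous_const.sub continuous_id)).tendsto α
    refine le_of_tendsto hlim ?_
    filter_upwards [Ioo_mem_nhdsGT ht.1] with s hs using key s hs
  -- linear lower bound: η a * (x - α) ≤ η x * (a - α) on (α, a)
  have hlin : ∀ x ∈ Ioo α a, η a * (x - α) ≤ η x * (a - α) := by
    intro x hx
    have hxmem : x ∈ Ioo α β := ⟨hx.1, hx.2.trans haβ⟩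
    have step : ∀ u ∈ Ioo α x, (η a - η x) * (x - u) ≤ η x * (a - x) := by
      intro u hu
      have hsub1 : Icc u x ⊆ Ioo α β := fun y hy => ⟨hu.1.trans_le hy.1, (hy.2.trans_lt hx.2).trans haβ⟩
      have hsub2 : Icc x a ⊆ Ioo α β := fun y hy => ⟨hx.1.trans_le hy.1, hy.2.trans_lt haβ⟩
      obtain ⟨ζ, hζ, hζs⟩ := exists_hasDerivAt_eq_slope η η' hu.2
        (hηc.mono hsub1) (fun y hy => hη' y (hsub1 ⟨hy.1.le, hy.2.le⟩))
      obtain ⟨ξ, hξ, hξs⟩ := exists_hasDerivAt_eq_slope η η' hx.2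
        (hηc.mono hsub2) (fun y hy => hη' y (hsub2 ⟨hy.1.le, hy.2.le⟩))
      have hζmem : ζ ∈ Ioo α β := hsub1 ⟨hζ.1.le, hζ.2.le⟩
      have hξmem : ξ ∈ Ioo α β := hsub2 ⟨hξ.1.le, hξ.2.le⟩
      have hζξ : ζ < ξ := hζ.2.trans hξ.1
      have h1 : η' ξ < η' ζ := hanti hζmem hξmem hζξ
      have hxu : 0 < x - u := sub_pos.2 hu.2
      have hax : 0 < a - x := sub_pos.2 hx.2
      have h2 : η' ζ * (x - u) = η x - η u := by rw [hζs]; field_simp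
      have h3 : η' ξ * (a - x) = η a - η x := by rw [hξs]; field_simp
      have hηu : 0 < η u := hη_pos u ⟨hu.1, (hu.2.trans hx.2).trans haβ⟩
      nlinarith [mul_le_mul_of_nonneg_right h1.le hax.le,
        mul_le_mul_of_nonneg_right h1.le hxu.le, mul_pos hxu hax]
    have hlim : Tendsto (fun u => (η a - η x) * (x - u)) (𝓝[>] α)
        (𝓝 ((η a - η x) * (x - α))) := by
      apply Tendsto.mono_left _ nhdsWithin_le_nhds
      exact (continuous_const.mul (continuous_const.sub continuous_id)).tendsto α
    have hfin : (η a - η x) * (x - α) ≤ η x * (a - x) := by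
      refine le_of_tendsto hlim ?_
      filter_upwards [Ioo_mem_nhdsGT hx.1] with u hu using step u hu
    nlinarith [hfin]
  -- the function F and its derivative
  set F : ℝ → ℝ := fun x => η x - (x - α) * η' x with hFdef
  have hF : ∀ x ∈ Ioo α β, HasDerivAt F (-(x - α) * η'' x) x := by
    intro x hx
    have h1 : HasDerivAt (fun y => (y - α) * η' y) (1 * η' x + (x - α) * η'' x) x :=
      ((hasDerivAt_id x).sub_const α).mul (hη'' x hx)
    have h2 := (hη' x hx).sub h1
    exact h2.congr_deriv (by ring)
  have hFnonneg : ∀ t ∈ Ioo α β, 0 ≤ F t := by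
    intro t ht
    have := htan t ht
    simp only [hFdef]
    nlinarith [this]
  set K : ℝ := η a / (a - α) with hKdef
  have haα' : 0 < a - α := sub_pos.2 haα
  have hK0 : 0 < K := div_pos (hη_pos a hamem) haα'
  -- the comparison function φ
  set φ : ℝ → ℝ := fun x => 2 * ε * K * (x - α) ^ 2 / c x with hφdef
  have hφF' : ∀ x ∈ Ioo α a, φ x ≤ -(x - α) * η'' x := by
    intro x hx
    have hxmem : x ∈ Ioo α β := ⟨hx.1, hx.2.trans haβ⟩
    have hcx : 0 < c x := hc_pos x hxmem
    have hηx : 0 < η x := hη_pos x hxmem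
    have hxα : 0 < x - α := sub_pos.2 hx.1
    have hA : ε * (2 * η x) ≤ -c x * η'' x := by
      have := hε x hxmem
      exact (le_div_iff₀ (by positivity)).1 this
    have hB : K * (x - α) ≤ η x := by
      have := hlin x hx
      rw [hKdef]
      rw [div_mul_eq_mul_div, div_le_iff₀ haα']
      linarith [this]
    simp only [hφdef]
    rw [div_le_iff₀ hcx]
    nlinarith [mul_le_mul_of_nonneg_right hB (by positivity : (0:ℝ) ≤ 2 * ε * (x - α)),
      mul_le_mul_of_nonneg_right hA hxα.le]
  -- φ is continuous on (α, β)
  have hφc : ContinuousOn φ (Ioo α β) := by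
    apply ContinuousOn.div
    · exact (continuous_const.mul ((continuous_id.sub continuous_const).pow 2)).continuousOn
    · exact hc_cont
    · exact fun x hx => (hc_pos x hx).ne'
  have hφnonneg : ∀ x ∈ Ioo α β, 0 ≤ φ x := by
    intro x hx
    have hcx : 0 < c x := hc_pos x hx
    simp only [hφdef]
    positivity
  -- uniform bound on integrals over Ioc t a
  have hbound : ∀ t ∈ Ioo α a, (∫ x in Ioc t a, φ x) ≤ F a := by
    intro t ht
    have htmem : t ∈ Ioo α β := ⟨ht.1, ht.2.trans haβ⟩
    have hsub : Icc t a ⊆ Ioo α β := fun y hy => ⟨ht.1.trans_le hy.1, hy.2.trans_lt haβ⟩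
    have hφint : IntegrableOn φ (Icc t a) := (hφc.mono hsub).integrableOn_compact isCompact_Icc
    have h1 : (∫ x in t..a, φ x) ≤ F a - F t := by
      apply intervalIntegral.integral_le_sub_of_hasDeriv_right_of_le ht.2.le
        ((hηc.sub ((continuousOn_id.sub continuousOn_const).mul hη'c)).mono hsub)
        (fun x hx => (hF x (hsub ⟨hx.1.le, hx.2.le⟩)).hasDerivWithinAt) hφint
      intro x hx
      exact hφF' x ⟨ht.1.trans hx.1, hx.2⟩
    rw [intervalIntegral.integral_of_le ht.2.le] at h1
    have h2 : 0 ≤ F t := hFnonneg t htmem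
    linarith
  -- the approximating sequence
  set t : ℕ → ℝ := fun n => α + (a - α) / (n + 2) with htdef
  have htmem : ∀ n, t n ∈ Ioo α a := by
    intro n
    have h2 : (0:ℝ) < (n:ℝ) + 2 := by positivity
    constructor
    · simp only [htdef]
      have : 0 < (a - α) / (n + 2) := div_pos haα' h2
      linarith
    · simp only [htdef]
      have h1 : (a - α) / (n + 2) < a - α := by
        rw [div_lt_iff₀ h2]
        nlinarith [haα']
      linarith
  have httend : Tendsto t atTop (𝓝 α) := by
    have h0 : Tendsto (fun n : ℕ => (a - α) / ((n:ℝ) + 2)) atTop (𝓝 0) := by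
      apply Tendsto.div_atTop tendsto_const_nhds
      exact tendsto_atTop_add_const_right atTop 2 tendsto_natCast_atTop_atTop
    have := tendsto_const_nhds.add h0 (x := atTop) (f := fun _ : ℕ => α)
    simpa using this
  -- integrability of φ on Ioc α a
  have hφInt : IntegrableOn φ (Ioc α a) := by
    apply MeasureTheory.integrableOn_Ioc_of_intervalIntegral_norm_bounded_left
      (I := F a) (a := t) (f := φ) (b := a) ?_ httend ?_
    · intro n
      have hsub : Icc (t n) a ⊆ Ioo α β :=
        fun y hy => ⟨(htmem n).1.trans_le hy.1, hy.2.trans_lt haβ⟩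
      exact ((hφc.mono hsub).integrableOn_compact isCompact_Icc).mono_set Ioc_subset_Icc_self
    · filter_upwards with n
      have heq : (∫ x in Ioc (t n) a, ‖φ x‖) = ∫ x in Ioc (t n) a, φ x := by
        apply setIntegral_congr_fun measurableSet_Ioc
        intro x hx
        have hxm : x ∈ Ioo α β := ⟨(htmem n).1.trans hx.1, hx.2.trans_lt haβ⟩
        exact Real.norm_of_nonneg (hφnonneg x hxm)
      rw [heq]
      exact hbound (t n) (htmem n)
  -- conclude
  have hmain : IntegrableOn (fun x => (x - α) ^ 2 / c x) (Ioc α a) := by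
    have h2εK : (2 * ε * K) ≠ 0 := by positivity
    have := hφInt.div_const (2 * ε * K)
    have heq : (fun x => φ x / (2 * ε * K)) = fun x => (x - α) ^ 2 / c x := by
      funext x
      simp only [hφdef]
      rw [div_div, mul_comm (c x) (2 * ε * K), ← div_div, mul_div_cancel_left₀ _ h2εK]
    rwa [heq] at this
  exact hmain.mono_set Ioo_subset_Ioc_self

theorem stmt0 (α β : ℝ) (hαβ : α < β) (c η η' η'' : ℝ → ℝ)
    (hc_pos : ∀ x ∈ Ioo α β, 0 < c x) (hc_cont : ContinuousOn c (Ioo α β))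
    (hη' : ∀ x ∈ Ioo α β, HasDerivAt η (η' x) x)
    (hη'' : ∀ x ∈ Ioo α β, HasDerivAt η' (η'' x) x)
    (hη_pos : ∀ x ∈ Ioo α β, 0 < η x)
    (hconc : ∀ x ∈ Ioo α β, η'' x < 0)
    (a : ℝ) (ha : a ∈ Ioo α β)
    (hint : ¬ IntegrableOn (fun x => (x - α) ^ 2 / c x) (Ioo α a)) :
    sInf ((fun x => -c x * η'' x / (2 * η x)) '' Ioo α β) = 0 := by
  set S := (fun x => -c x * η'' x / (2 * η x)) '' Ioo α β with hSdef
  have hSne : S.Nonempty := ⟨_, mem_image_of_mem _ ha⟩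
  have hS0 : ∀ y ∈ S, 0 ≤ y := by
    rintro y ⟨x, hx, rfl⟩
    have h1 : 0 < c x := hc_pos x hx
    have h2 : η'' x < 0 := hconc x hx
    have h3 : 0 < η x := hη_pos x hx
    apply div_nonneg _ (by positivity)
    nlinarith
  have hbdd : BddBelow S := ⟨0, fun y hy => hS0 y hy⟩
  refine le_antisymm ?_ (le_csInf hSne hS0)
  by_contra hpos
  push_neg at hpos
  have hε : ∀ x ∈ Ioo α β, sInf S ≤ -c x * η'' x / (2 * η x) := fun x hx =>
    csInf_le hbdd (mem_image_of_mem _ hx)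
  exact hint (aux_integrable α β hαβ c η η' η'' hc_pos hc_cont hη' hη'' hη_pos hconc
    a ha (sInf S) hpos hε)
end

section
/- Let $c:(\alpha,\beta)\to(0,\infty)$ satisfy $\lim_{x\downarrow\alpha}\frac{(x-\alpha)^2}{c(x)} = \infty$. Then the generalized principal eigenvalue $\lambda^* := \sup_{\eta\in C^2,\,\eta>0}\inf_{x\in(\alpha,\beta)} \frac{-c(x)\eta''(x)}{2\eta(x)}$ equals $0$. -/
open Set Filter

private lemma hasDerivAt_L (α x : ℝ) (hx : α < x) :
    HasDerivAt (fun y => Real.log (y - α)) (1 / (x - α)) x := by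
  have h1 : HasDerivAt (fun y : ℝ => y - α) 1 x := (hasDerivAt_id x).sub_const α
  have := (Real.hasDerivAt_log (sub_pos.2 hx).ne').comp x h1
  exact this.congr_deriv (by simp)

private lemma hasDerivAt_u (α x : ℝ) (hx : α < x) :
    HasDerivAt (fun y => Real.exp (Real.log (y - α) / 2) * Real.sin (Real.log (y - α)))
      (Real.exp (-Real.log (x - α) / 2) *
        (Real.sin (Real.log (x - α)) / 2 + Real.cos (Real.log (x - α)))) x := by
  have ht : (0:ℝ) < x - α := sub_pos.2 hx
  have hL := hasDerivAt_L α x hx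
  have h1 : HasDerivAt (fun y => Real.exp (Real.log (y - α) / 2))
      (Real.exp (Real.log (x - α) / 2) * (1 / (x - α) / 2)) x := (hL.div_const 2).exp
  have h2 : HasDerivAt (fun y => Real.sin (Real.log (y - α)))
      (Real.cos (Real.log (x - α)) * (1 / (x - α))) x := hL.sin
  refine (h1.mul h2).congr_deriv ?_
  have hT : Real.exp (Real.log (x - α)) = x - α := Real.exp_log ht
  set L := Real.log (x - α) with hLdef
  have e1 : Real.exp (L / 2) = Real.exp (-L / 2) * (x - α) := by
    rw [← hT, ← Real.exp_add]; ring_nf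
  rw [e1]
  field_simp

private lemma hasDerivAt_u1 (α x : ℝ) (hx : α < x) :
    HasDerivAt (fun y => Real.exp (-Real.log (y - α) / 2) *
        (Real.sin (Real.log (y - α)) / 2 + Real.cos (Real.log (y - α))))
      (-(5/4) * Real.exp (-(3 * Real.log (x - α)) / 2) * Real.sin (Real.log (x - α))) x := by
  have ht : (0:ℝ) < x - α := sub_pos.2 hx
  have hL := hasDerivAt_L α x hx
  have h1 : HasDerivAt (fun y => Real.exp (-Real.log (y - α) / 2))
      (Real.exp (-Real.log (x - α) / 2) * (-(1 / (x - α)) / 2)) x := (hL.neg.div_const 2).exp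
  have h2 : HasDerivAt (fun y => Real.sin (Real.log (y - α)) / 2 + Real.cos (Real.log (y - α)))
      (Real.cos (Real.log (x - α)) * (1 / (x - α)) / 2 +
        -Real.sin (Real.log (x - α)) * (1 / (x - α))) x := (hL.sin.div_const 2).add hL.cos
  refine (h1.mul h2).congr_deriv ?_
  have hT : Real.exp (Real.log (x - α)) = x - α := Real.exp_log ht
  set L := Real.log (x - α) with hLdef
  have e1 : Real.exp (-L / 2) = Real.exp (-(3 * L) / 2) * (x - α) := by
    rw [← hT, ← Real.exp_add]; ring_nf
  rw [e1]
  field_simp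
  ring

set_option maxHeartbeats 1000000 in
theorem stmt6 (α β : ℝ) (hαβ : α < β) (c : ℝ → ℝ)
    (hc_pos : ∀ x ∈ Ioo α β, 0 < c x) (hc_cont : ContinuousOn c (Ioo α β))
    (hlim : Tendsto (fun x => (x - α) ^ 2 / c x) (nhdsWithin α (Ioi α)) atTop) :
    sSup {l : ℝ | ∃ η : ℝ → ℝ, (∀ x ∈ Ioo α β, 0 < η x) ∧
        ContDiffOn ℝ 2 η (Ioo α β) ∧
        l = sInf ((fun x => -c x * deriv (deriv η) x / (2 * η x)) '' Ioo α β)} = 0 := by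
  set S := {l : ℝ | ∃ η : ℝ → ℝ, (∀ x ∈ Ioo α β, 0 < η x) ∧
        ContDiffOn ℝ 2 η (Ioo α β) ∧
        l = sInf ((fun x => -c x * deriv (deriv η) x / (2 * η x)) '' Ioo α β)} with hS
  have hIoo : (Ioo α β).Nonempty := nonempty_Ioo.2 hαβ
  -- 0 ∈ S
  have h0S : (0:ℝ) ∈ S := by
    refine ⟨fun _ => 1, fun x _ => one_pos, contDiffOn_const, ?_⟩
    have hde : deriv (deriv (fun _ : ℝ => (1:ℝ))) = fun _ => 0 := by
      simp [deriv_const']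
    have himg : ((fun x => -c x * deriv (deriv (fun _ : ℝ => (1:ℝ))) x / (2 * 1)) '' Ioo α β)
        = {0} := by
      rw [hde]
      have : (fun x => -c x * (0:ℝ) / (2 * 1)) = fun _ : ℝ => (0:ℝ) := by
        funext x; ring
      rw [this]
      exact hIoo.image_const 0
    rw [himg, csInf_singleton]
  -- every element of S is ≤ 0
  have hB : ∀ l ∈ S, l ≤ 0 := by
    rintro l ⟨η, hηpos, hηC2, hl⟩
    by_contra hneg
    push_neg at hneg
    have hlpos : 0 < l := hneg
    set f : ℝ → ℝ := fun x => -c x * deriv (deriv η) x / (2 * η x) with hf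
    have hne : (f '' Ioo α β).Nonempty := hIoo.image f
    by_cases hbdd : BddBelow (f '' Ioo α β)
    case neg =>
      rw [Real.sInf_of_not_bddBelow hbdd] at hl
      exact absurd hl hlpos.ne'
    have hlb : ∀ x ∈ Ioo α β, l ≤ f x := fun x hx => hl ▸ csInf_le hbdd ⟨x, hx, rfl⟩
    -- eventual bound near α
    have hev : ∀ᶠ x in nhdsWithin α (Ioi α), 5 / (8 * l) ≤ (x - α) ^ 2 / c x :=
      hlim.eventually (eventually_ge_atTop (5 / (8 * l)))
    rw [eventually_nhdsWithin_iff, Metric.eventually_nhds_iff] at hev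
    obtain ⟨ε, hε, hball⟩ := hev
    set D := min β (α + ε) with hD
    have hαD : α < D := lt_min hαβ (by linarith)
    -- choose integer k
    obtain ⟨k, hk⟩ := exists_int_lt ((Real.log (D - α) - Real.pi) / (2 * Real.pi))
    have hπ := Real.pi_pos
    have hkπ : (k : ℝ) * (2 * Real.pi) + Real.pi < Real.log (D - α) := by
      have := (lt_div_iff₀ (by positivity)).mp hk
      linarith
    set a := α + Real.exp ((k : ℝ) * (2 * Real.pi)) with ha
    set b := α + Real.exp ((k : ℝ) * (2 * Real.pi) + Real.pi) with hb
    have hab : a < b := by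
      have := Real.exp_lt_exp.2 (show (k:ℝ) * (2*Real.pi) < (k:ℝ) * (2*Real.pi) + Real.pi by linarith)
      simpa [ha, hb] using this
    have hαa : α < a := by
      have := Real.exp_pos ((k : ℝ) * (2 * Real.pi)); simp [ha]; linarith
    have hbD : b < D := by
      have h1 : Real.exp ((k : ℝ) * (2 * Real.pi) + Real.pi) < D - α := by
        rw [← Real.exp_log (sub_pos.2 hαD)]
        exact Real.exp_lt_exp.2 hkπ
      simp [hb]; linarith
    -- basic facts on Icc a b
    have hmem : ∀ x ∈ Icc a b, x ∈ Ioo α β ∧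
        (k : ℝ) * (2 * Real.pi) ≤ Real.log (x - α) ∧
        Real.log (x - α) ≤ (k : ℝ) * (2 * Real.pi) + Real.pi ∧
        5 / (8 * l) ≤ (x - α) ^ 2 / c x := by
      rintro x ⟨hxa, hxb⟩
      have hαx : α < x := lt_of_lt_of_le hαa hxa
      have hxβ : x < β := lt_of_le_of_lt hxb (lt_of_lt_of_le hbD (min_le_left _ _))
      have htp : (0:ℝ) < x - α := sub_pos.2 hαx
      have hlog1 : (k : ℝ) * (2 * Real.pi) ≤ Real.log (x - α) := by
        rw [Real.le_log_iff_exp_le htp]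
        simp only [ha] at hxa; linarith
      have hlog2 : Real.log (x - α) ≤ (k : ℝ) * (2 * Real.pi) + Real.pi := by
        rw [Real.log_le_iff_le_exp htp]
        simp only [hb] at hxb; linarith
      have hdist : dist x α < ε := by
        rw [Real.dist_eq, abs_of_pos htp]
        have : x ≤ b := hxb
        have : b < α + ε := lt_of_lt_of_le hbD (min_le_right _ _)
        linarith
      exact ⟨⟨hαx, hxβ⟩, hlog1, hlog2, hball hdist hαx⟩
    -- second derivative machinery
    have hη1 : ContDiffOn ℝ 1 (deriv η) (Ioo α β) :=
      hηC2.deriv_of_isOpen isOpen_Ioo (by norm_num)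
    have hdη : ∀ x ∈ Ioo α β, HasDerivAt η (deriv η x) x := by
      intro x hx
      exact ((hηC2.differentiableOn (by norm_num)).differentiableAt
        (isOpen_Ioo.mem_nhds hx)).hasDerivAt
    have hddη : ∀ x ∈ Ioo α β, HasDerivAt (deriv η) (deriv (deriv η) x) x := by
      intro x hx
      exact ((hη1.differentiableOn (by norm_num)).differentiableAt
        (isOpen_Ioo.mem_nhds hx)).hasDerivAt
    -- key pointwise inequality
    have hq : ∀ x ∈ Icc a b, (x - α) ^ 2 * deriv (deriv η) x ≤ -(5/4) * η x := by
      intro x hx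
      obtain ⟨hxIoo, _, _, hbound⟩ := hmem x hx
      have hcx : 0 < c x := hc_pos x hxIoo
      have hηx : 0 < η x := hηpos x hxIoo
      have htp : (0:ℝ) < x - α := sub_pos.2 hxIoo.1
      have h1 : l * (2 * η x) ≤ -c x * deriv (deriv η) x := by
        have := hlb x hxIoo
        rw [hf, le_div_iff₀ (by positivity)] at this
        exact this
      have h2 : 5 * c x ≤ 8 * l * (x - α) ^ 2 := by
        rw [div_le_div_iff₀ (by positivity) hcx] at hbound
        linarith
      have hd2 : deriv (deriv η) x < 0 := by nlinarith
      nlinarith [mul_le_mul_of_nonneg_left h2 (neg_nonneg.2 hd2.le)]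
    -- Wronskian
    set u : ℝ → ℝ := fun y => Real.exp (Real.log (y - α) / 2) * Real.sin (Real.log (y - α))
      with hu
    set u1 : ℝ → ℝ := fun y => Real.exp (-Real.log (y - α) / 2) *
        (Real.sin (Real.log (y - α)) / 2 + Real.cos (Real.log (y - α))) with hu1
    set W : ℝ → ℝ := fun y => deriv η y * u y - η y * u1 y with hW
    have hsin : ∀ x ∈ Icc a b, 0 ≤ Real.sin (Real.log (x - α)) := by
      intro x hx
      obtain ⟨_, hlog1, hlog2, _⟩ := hmem x hx
      have : Real.sin (Real.log (x - α)) =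
          Real.sin (Real.log (x - α) - k * (2 * Real.pi)) :=
        (Real.sin_sub_int_mul_two_pi _ k).symm
      rw [this]
      exact Real.sin_nonneg_of_nonneg_of_le_pi (by linarith) (by linarith)
    have hWderiv : ∀ x ∈ Icc a b, HasDerivAt W
        (deriv (deriv η) x * u x -
          η x * (-(5/4) * Real.exp (-(3 * Real.log (x - α)) / 2) *
            Real.sin (Real.log (x - α)))) x := by
      intro x hx
      obtain ⟨hxIoo, _, _, _⟩ := hmem x hx
      have hαx : α < x := hxIoo.1
      have h1 := (hddη x hxIoo).mul (hasDerivAt_u α x hαx)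
      have h2 := (hdη x hxIoo).mul (hasDerivAt_u1 α x hαx)
      have := h1.sub h2
      refine this.congr_deriv ?_
      simp only [hu, hu1]
      ring
    have hWanti : AntitoneOn W (Icc a b) := by
      apply antitoneOn_of_deriv_nonpos (convex_Icc a b)
      · exact fun x hx => (hWderiv x hx).continuousAt.continuousWithinAt
      · intro x hx
        rw [interior_Icc] at hx
        exact (hWderiv x (Ioo_subset_Icc_self hx)).differentiableAt.differentiableWithinAt
      · intro x hx
        rw [interior_Icc] at hx
        have hx' := Ioo_subset_Icc_self hx
        rw [(hWderiv x hx').deriv]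
        obtain ⟨hxIoo, _, _, _⟩ := hmem x hx'
        have htp : (0:ℝ) < x - α := sub_pos.2 hxIoo.1
        have hT : Real.exp (Real.log (x - α)) = x - α := Real.exp_log htp
        have hηx : 0 < η x := hηpos x hxIoo
        have hsinx := hsin x hx'
        have hqx := hq x hx'
        simp only [hu]
        set L := Real.log (x - α) with hL
        set A := Real.exp (L / 2) with hA
        set E3 := Real.exp (-(3 * L) / 2) with hE3
        set s := Real.sin L with hs
        set d2 := deriv (deriv η) x with hd2
        have hApos : 0 < A := Real.exp_pos _
        have hA2 : A * A = x - α := by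
          rw [hA, ← Real.exp_add, ← hT]; ring_nf
        have hA3 : E3 * (A * A * A) = 1 := by
          rw [hE3, hA, ← Real.exp_add, ← Real.exp_add, ← Real.exp_add, ← Real.exp_zero]
          ring_nf
        have hP : (0:ℝ) < A * A * A := by positivity
        have key : (x - α) ^ 2 * d2 * s ≤ -(5/4) * η x * s :=
          mul_le_mul_of_nonneg_right hqx hsinx
        have hiden : (d2 * (A * s) - η x * (-(5/4) * E3 * s)) * (A * A * A)
            = (x - α) ^ 2 * d2 * s - -(5/4) * η x * s + ((5/4) * η x * s) * (E3 * (A*A*A))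
              + d2 * s * (A * A + (x - α)) * (A * A - (x - α)) - (5/4) * η x * s := by
          ring
        have hmul : (d2 * (A * s) - η x * (-(5/4) * E3 * s)) * (A * A * A) ≤ 0 * (A * A * A) := by
          rw [hiden, hA3, hA2]
          ring_nf
          nlinarith [key]
        exact (mul_le_mul_iff_of_pos_right hP).mp hmul
    -- endpoint values
    have haI : a ∈ Icc a b := ⟨le_refl a, hab.le⟩
    have hbI : b ∈ Icc a b := ⟨hab.le, le_refl b⟩
    have hsin_a : Real.sin (Real.log (a - α)) = 0 := by
      have : a - α = Real.exp ((k : ℝ) * (2 * Real.pi)) := by simp [ha]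
      rw [this, Real.log_exp]
      have : (k : ℝ) * (2 * Real.pi) = (2 * k : ℤ) * Real.pi := by push_cast; ring
      rw [this]
      exact Real.sin_int_mul_pi _
    have hcos_a : Real.cos (Real.log (a - α)) = 1 := by
      have : a - α = Real.exp ((k : ℝ) * (2 * Real.pi)) := by simp [ha]
      rw [this, Real.log_exp]
      exact Real.cos_int_mul_two_pi k
    have hsin_b : Real.sin (Real.log (b - α)) = 0 := by
      have : b - α = Real.exp ((k : ℝ) * (2 * Real.pi) + Real.pi) := by simp [hb]
      rw [this, Real.log_exp, Real.sin_add_pi]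
      have : (k : ℝ) * (2 * Real.pi) = (2 * k : ℤ) * Real.pi := by push_cast; ring
      rw [this, Real.sin_int_mul_pi]
      ring
    have hcos_b : Real.cos (Real.log (b - α)) = -1 := by
      have : b - α = Real.exp ((k : ℝ) * (2 * Real.pi) + Real.pi) := by simp [hb]
      rw [this, Real.log_exp]
      exact Real.cos_int_mul_two_pi_add_pi k
    have hWa : W a < 0 := by
      have hηa : 0 < η a := hηpos a (hmem a haI).1
      have hE : 0 < Real.exp (-Real.log (a - α) / 2) := Real.exp_pos _
      have : W a = -(η a * Real.exp (-Real.log (a - α) / 2)) := by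
        simp only [hW, hu, hu1, hsin_a, hcos_a]; ring
      rw [this]
      exact neg_lt_zero.mpr (mul_pos hηa hE)
    have hWb : 0 < W b := by
      have hηb : 0 < η b := hηpos b (hmem b hbI).1
      have hE : 0 < Real.exp (-Real.log (b - α) / 2) := Real.exp_pos _
      have : W b = η b * Real.exp (-Real.log (b - α) / 2) := by
        simp only [hW, hu, hu1, hsin_b, hcos_b]; ring
      rw [this]
      exact mul_pos hηb hE
    have := hWanti haI hbI hab.le
    linarith
  exact le_antisymm (csSup_le ⟨0, h0S⟩ hB) (le_csSup ⟨0, hB⟩ h0S)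
end

section
/- Let $(\alpha,\beta)$ be a bounded interval, $\lambda>0$, and let $\eta\in C^2(\alpha,\beta)$, $\eta>0$, satisfy $\frac{1}{2}c(x)\eta''(x) = -\lambda\eta(x)$ with $c>0$ continuous, $\lim_{x\downarrow\alpha}\eta(x)=0=\lim_{x\uparrow\beta}\eta(x)$, and $\int_\alpha^\beta \frac{\eta(x)^2}{c(x)}dx<\infty$. Then $\liminf_{x\downarrow\alpha}\eta(x)\eta'(x) = 0$ and, for a point $x_0$ with $\eta'(x_0)=0$, $\int_\alpha^{x_0}\eta'(y)^2\,dy < \infty$. -/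
open Set Filter MeasureTheory
open scoped Topology

theorem stmt7 (α β : ℝ) (hαβ : α < β) (lam : ℝ) (hlam : 0 < lam)
    (c η η' η'' : ℝ → ℝ)
    (hc_pos : ∀ x ∈ Ioo α β, 0 < c x) (hc_cont : ContinuousOn c (Ioo α β))
    (hη' : ∀ x ∈ Ioo α β, HasDerivAt η (η' x) x)
    (hη'' : ∀ x ∈ Ioo α β, HasDerivAt η' (η'' x) x)
    (hη_pos : ∀ x ∈ Ioo α β, 0 < η x)
    (hode : ∀ x ∈ Ioo α β, (1 / 2) * c x * η'' x = -lam * η x)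
    (hlimα : Tendsto η (nhdsWithin α (Ioi α)) (nhds 0))
    (hlimβ : Tendsto η (nhdsWithin β (Iio β)) (nhds 0))
    (hint : IntegrableOn (fun x => η x ^ 2 / c x) (Ioo α β))
    (x₀ : ℝ) (hx₀ : x₀ ∈ Ioo α β) (hcrit : η' x₀ = 0) :
    liminf (fun x => η x * η' x) (nhdsWithin α (Ioi α)) = 0 ∧
      IntegrableOn (fun y => η' y ^ 2) (Ioo α x₀) := by
  obtain ⟨hαx₀, hx₀β⟩ := hx₀
  have hη_cont : ContinuousOn η (Ioo α β) := fun x hx =>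
    ((hη' x hx).continuousAt).continuousWithinAt
  have hη'_cont : ContinuousOn η' (Ioo α β) := fun x hx =>
    ((hη'' x hx).continuousAt).continuousWithinAt
  have hode' : ∀ x ∈ Ioo α β, η'' x = -(2 * lam * η x) / c x := by
    intro x hx
    have h := hode x hx
    have hc := (hc_pos x hx).ne'
    field_simp
    linarith
  -- η' is strictly antitone, hence positive on (α, x₀)
  have hanti : StrictAntiOn η' (Ioo α β) := by
    apply strictAntiOn_of_deriv_neg (convex_Ioo α β) hη'_cont
    intro x hx
    rw [interior_Ioo] at hx
    rw [(hη'' x hx).deriv, hode' x hx]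
    have := hc_pos x hx
    have := hη_pos x hx
    have : 0 < 2 * lam * η x := by positivity
    exact div_neg_of_neg_of_pos (by linarith) (hc_pos x hx)
  have hη'_pos : ∀ x ∈ Ioo α x₀, 0 < η' x := by
    intro x hx
    have := hanti ⟨hx.1, hx.2.trans hx₀β⟩ ⟨hαx₀, hx₀β⟩ hx.2
    rw [hcrit] at this
    exact this
  -- the integrand g
  set g : ℝ → ℝ := fun y => 2 * lam * η y ^ 2 / c y - η' y ^ 2 with hg_def
  have hsubIcc : ∀ {y x : ℝ}, α < y → x < β → Icc y x ⊆ Ioo α β := by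
    intro y x hy hx t ht
    exact ⟨hy.trans_le ht.1, ht.2.trans_lt hx⟩
  have hg_cont : ContinuousOn g (Ioo α β) := by
    apply ContinuousOn.sub
    · exact (continuousOn_const.mul (hη_cont.pow 2)).div hc_cont
        (fun x hx => (hc_pos x hx).ne')
    · exact hη'_cont.pow 2
  have hFderiv : ∀ t ∈ Ioo α β,
      HasDerivAt (fun y => η y * η' y) (-g t) t := by
    intro t ht
    have h := (hη' t ht).mul (hη'' t ht)
    have heq : η' t * η' t + η t * η'' t = -g t := by
      rw [hode' t ht]
      have hc := (hc_pos t ht).ne'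
      simp only [hg_def]; field_simp
      ring
    rwa [heq] at h
  -- key identity
  have hkey : ∀ x ∈ Ioc α x₀, η x * η' x = ∫ y in x..x₀, g y := by
    intro x hx
    have hxβ : x < β := hx.2.trans_lt hx₀β
    have hsub : Icc x x₀ ⊆ Ioo α β := hsubIcc hx.1 hx₀β
    have hle : x ≤ x₀ := hx.2
    have hintg : IntervalIntegrable (fun y => -g y) volume x x₀ := by
      apply ContinuousOn.intervalIntegrable
      rw [uIcc_of_le hle]
      exact (hg_cont.mono hsub).neg
    have := intervalIntegral.integral_eq_sub_of_hasDerivAt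
      (f := fun y => η y * η' y) (f' := fun y => -g y)
      (fun t ht => hFderiv t (hsub ((uIcc_of_le hle) ▸ ht))) hintg
    simp only [hcrit, mul_zero, zero_sub, intervalIntegral.integral_neg] at this
    linarith
  -- nonnegativity of η y ^ 2 / c y on (α, x₀)
  have hint0 : IntegrableOn (fun y => η y ^ 2 / c y) (Ioo α x₀) :=
    hint.mono_set (Ioo_subset_Ioo_right hx₀β.le)
  set M : ℝ := 2 * lam * ∫ y in Ioo α x₀, η y ^ 2 / c y with hM_def
  have hbound : ∀ x ∈ Ioo α x₀, (∫ y in x..x₀, η' y ^ 2) ≤ M := by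
    intro x hx
    have hle : x ≤ x₀ := hx.2.le
    have hsub : Icc x x₀ ⊆ Ioo α β := hsubIcc hx.1 hx₀β
    have hi1 : IntervalIntegrable (fun y => 2 * lam * η y ^ 2 / c y) volume x x₀ := by
      apply ContinuousOn.intervalIntegrable
      rw [uIcc_of_le hle]
      exact (continuousOn_const.mul ((hη_cont.mono hsub).pow 2)).div (hc_cont.mono hsub)
        (fun t ht => (hc_pos t (hsub ht)).ne')
    have hi2 : IntervalIntegrable (fun y => η' y ^ 2) volume x x₀ := by
      apply ContinuousOn.intervalIntegrable
      rw [uIcc_of_le hle]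
      exact (hη'_cont.mono hsub).pow 2
    have hF : 0 ≤ η x * η' x := by
      have h1 := hη_pos x ⟨hx.1, hx.2.trans hx₀β⟩
      have h2 := hη'_pos x hx
      positivity
    have hkx := hkey x ⟨hx.1, hle⟩
    have hsplit : (∫ y in x..x₀, g y)
        = (∫ y in x..x₀, 2 * lam * η y ^ 2 / c y) - ∫ y in x..x₀, η' y ^ 2 :=
      intervalIntegral.integral_sub hi1 hi2
    have h2 : (∫ y in x..x₀, η' y ^ 2) ≤ ∫ y in x..x₀, 2 * lam * η y ^ 2 / c y := by
      rw [hkx, hsplit] at hF; linarith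
    refine h2.trans ?_
    rw [intervalIntegral.integral_of_le hle, integral_Ioc_eq_integral_Ioo]
    have heq : (∫ y in Ioo x x₀, 2 * lam * η y ^ 2 / c y)
        = 2 * lam * ∫ y in Ioo x x₀, η y ^ 2 / c y := by
      simp_rw [mul_div_assoc]
      exact integral_const_mul _ _
    rw [heq, hM_def]
    have hmono : (∫ y in Ioo x x₀, η y ^ 2 / c y) ≤ ∫ y in Ioo α x₀, η y ^ 2 / c y := by
      apply setIntegral_mono_set hint0
      · refine (ae_restrict_iff' measurableSet_Ioo).2 (ae_of_all _ fun y hy => ?_)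
        exact div_nonneg (sq_nonneg _) (hc_pos y ⟨hy.1, hy.2.trans hx₀β⟩).le
      · exact HasSubset.Subset.eventuallyLE (Ioo_subset_Ioo_left hx.1.le)
    have h2lam : (0:ℝ) ≤ 2 * lam := by linarith
    exact mul_le_mul_of_nonneg_left hmono h2lam
  -- Part 2 : integrability of η'^2
  have hInt2 : IntegrableOn (fun y => η' y ^ 2) (Ioo α x₀) := by
    have hx₀α : (0:ℝ) < x₀ - α := sub_pos.2 hαx₀
    set a : ℕ → ℝ := fun n => α + (x₀ - α) / (n + 2) with ha_def
    have ha_mem : ∀ n, a n ∈ Ioo α x₀ := by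
      intro n
      have h2 : (0:ℝ) < (n:ℝ) + 2 := by positivity
      constructor
      · have : 0 < (x₀ - α) / ((n:ℝ) + 2) := by positivity
        simp only [ha_def]; linarith
      · have : (x₀ - α) / ((n:ℝ) + 2) < x₀ - α := by
          rw [div_lt_iff₀ h2]; nlinarith
        simp only [ha_def]; linarith
    have ha_tend : Tendsto a atTop (𝓝 α) := by
      have h0 : Tendsto (fun n : ℕ => (x₀ - α) / ((n:ℝ) + 2)) atTop (𝓝 0) := by
        apply Tendsto.div_atTop tendsto_const_nhds
        exact tendsto_atTop_add_const_right _ 2 tendsto_natCast_atTop_atTop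
      have h1 : Tendsto (fun n : ℕ => α + (x₀ - α) / ((n:ℝ) + 2)) atTop (𝓝 (α + 0)) :=
        tendsto_const_nhds.add h0
      simpa using h1
    have hcover : AECover (volume.restrict (Ioo α x₀)) atTop (fun n => Ioo (a n) x₀) :=
      aecover_Ioo_of_Ioo ha_tend tendsto_const_nhds
    rw [IntegrableOn]
    apply hcover.integrable_of_integral_norm_bounded M
    · intro n
      rw [IntegrableOn, Measure.restrict_restrict measurableSet_Ioo,
        inter_eq_left.2 (Ioo_subset_Ioo_left (ha_mem n).1.le)]
      have hsub : Icc (a n) x₀ ⊆ Ioo α β := hsubIcc (ha_mem n).1 hx₀β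
      have : ContinuousOn (fun y => η' y ^ 2) (Icc (a n) x₀) := (hη'_cont.mono hsub).pow 2
      exact this.integrableOn_Icc.mono_set Ioo_subset_Icc_self
    · filter_upwards with n
      rw [Measure.restrict_restrict measurableSet_Ioo,
        inter_eq_left.2 (Ioo_subset_Ioo_left (ha_mem n).1.le)]
      have hnorm : ∀ y : ℝ, ‖η' y ^ 2‖ = η' y ^ 2 := fun y => by
        rw [Real.norm_eq_abs, abs_of_nonneg (sq_nonneg _)]
      simp_rw [hnorm]
      rw [← integral_Ioc_eq_integral_Ioo, ← intervalIntegral.integral_of_le (ha_mem n).2.le]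
      exact hbound _ (ha_mem n)
  refine ⟨?_, hInt2⟩
  -- Part 1
  have hgInt : IntegrableOn g (Ioo α x₀) := by
    have h1 : IntegrableOn (fun y => 2 * lam * η y ^ 2 / c y) (Ioo α x₀) := by
      have := hint0.const_mul (2 * lam)
      simp only [mul_div_assoc]; exact this
    exact h1.sub hInt2
  have hgInt' : IntervalIntegrable g volume α x₀ := by
    rw [intervalIntegrable_iff_integrableOn_Ioo_of_le hαx₀.le]
    exact hgInt
  set I : ℝ := ∫ y in α..x₀, g y with hI_def
  set P : ℝ → ℝ := fun b => ∫ y in α..b, g y with hP_def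
  have hPcont : ContinuousWithinAt P (Icc α x₀) α := by
    apply intervalIntegral.continuousWithinAt_primitive (measure_singleton α)
    rw [min_self, max_eq_right hαx₀.le]
    exact hgInt'
  have hPtend : Tendsto P (nhdsWithin α (Ioi α)) (𝓝 0) := by
    have h0 : P α = 0 := by simp [hP_def]
    have h := hPcont.tendsto
    rw [h0] at h
    refine h.mono_left ?_
    rw [← nhdsWithin_Ioc_eq_nhdsGT hαx₀]
    exact nhdsWithin_mono _ Ioc_subset_Icc_self
  have hFtend : Tendsto (fun x => η x * η' x) (nhdsWithin α (Ioi α)) (𝓝 I) := by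
    have heq : ∀ᶠ x in nhdsWithin α (Ioi α), η x * η' x = I - P x := by
      filter_upwards [Ioc_mem_nhdsGT hαx₀] with x hx
      rw [hkey x hx]
      have h1 : IntervalIntegrable g volume α x := hgInt'.mono_set (by
        rw [uIcc_of_le hx.1.le, uIcc_of_le hαx₀.le]; exact Icc_subset_Icc_right hx.2)
      have h2 : IntervalIntegrable g volume x x₀ := hgInt'.mono_set (by
        rw [uIcc_of_le hx.2, uIcc_of_le hαx₀.le]; exact Icc_subset_Icc_left hx.1.le)
      have hadd := intervalIntegral.integral_add_adjacent_intervals h1 h2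
      simp only [hI_def, hP_def]
      linarith [hadd]
    have h := (tendsto_const_nhds (α := ℝ) (x := I) (f := nhdsWithin α (Ioi α))).sub hPtend
    rw [sub_zero] at h
    exact Tendsto.congr' (heq.mono fun x hx => hx.symm) h
  have hliminf : liminf (fun x => η x * η' x) (nhdsWithin α (Ioi α)) = I :=
    hFtend.liminf_eq
  have hI_nonneg : 0 ≤ I := by
    refine ge_of_tendsto hFtend ?_
    filter_upwards [Ioo_mem_nhdsGT hαx₀] with x hx
    exact le_of_lt (mul_pos (hη_pos x ⟨hx.1, hx.2.trans hx₀β⟩) (hη'_pos x hx))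
  rw [hliminf]
  by_contra hI0
  have hIpos : 0 < I := lt_of_le_of_ne hI_nonneg (Ne.symm hI0)
  -- eventually bounds
  have h1 : ∀ᶠ x in nhdsWithin α (Ioi α), I / 2 < η x * η' x :=
    hFtend.eventually (eventually_gt_nhds (by linarith))
  have h2 : ∀ᶠ x in nhdsWithin α (Ioi α), η x * η' x < 2 * I :=
    hFtend.eventually (eventually_lt_nhds (by linarith))
  have h3 : ∀ᶠ x in nhdsWithin α (Ioi α), x ∈ Ioo α x₀ :=
    eventually_mem_set.2 (Ioo_mem_nhdsGT hαx₀)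
  obtain ⟨u, hu, hsub2⟩ := mem_nhdsGT_iff_exists_Ioo_subset.1 ((h1.and h2).and h3)
  set b := min u x₀ with hb_def
  have hαb : α < b := lt_min hu hαx₀
  have hbx₀ : b ≤ x₀ := min_le_right _ _
  have hgood : ∀ x ∈ Ioo α b, (I / 2 < η x * η' x ∧ η x * η' x < 2 * I) ∧ x ∈ Ioo α x₀ :=
    fun x hx => hsub2 ⟨hx.1, hx.2.trans_le (min_le_left _ _)⟩
  have hup : ∀ x ∈ Ioo α b, η x ^ 2 ≤ 4 * I * (x - α) := by
    intro x hx
    have key : ∀ y ∈ Ioo α x, η x ^ 2 ≤ η y ^ 2 + 4 * I * (x - y) := by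
      intro y hy
      have hyx : y ≤ x := hy.2.le
      have hsubb : Icc y x ⊆ Ioo α b := fun t ht => ⟨hy.1.trans_le ht.1, ht.2.trans_lt hx.2⟩
      have hsubβ : Icc y x ⊆ Ioo α β := fun t ht =>
        ⟨hy.1.trans_le ht.1, ((lt_of_lt_of_le (ht.2.trans_lt hx.2) hbx₀).trans hx₀β)⟩
      have hderiv : ∀ t ∈ uIcc y x, HasDerivAt (fun s => η s ^ 2) (2 * (η t * η' t)) t := by
        intro t ht
        rw [uIcc_of_le hyx] at ht
        have h := (hη' t (hsubβ ht)).fun_pow 2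
        refine h.congr_deriv ?_
        push_cast
        ring
      have hintc : IntervalIntegrable (fun t => 2 * (η t * η' t)) volume y x := by
        apply ContinuousOn.intervalIntegrable
        rw [uIcc_of_le hyx]
        exact continuousOn_const.mul ((hη_cont.mono hsubβ).mul (hη'_cont.mono hsubβ))
      have hftc := intervalIntegral.integral_eq_sub_of_hasDerivAt hderiv hintc
      have hmono : (∫ t in y..x, 2 * (η t * η' t)) ≤ ∫ t in y..x, 4 * I := by
        apply intervalIntegral.integral_mono_on hyx hintc intervalIntegrable_const
        intro t ht
        have := (hgood t (hsubb ht)).1.2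
        linarith
      rw [hftc] at hmono
      rw [intervalIntegral.integral_const, smul_eq_mul] at hmono
      nlinarith [hmono]
    have htend : Tendsto (fun y => η y ^ 2 + 4 * I * (x - y)) (nhdsWithin α (Ioi α))
        (𝓝 (0 + 4 * I * (x - α))) := by
      apply Tendsto.add
      · simpa using hlimα.pow 2
      · exact Tendsto.const_mul _
          (tendsto_const_nhds.sub (tendsto_id.mono_left nhdsWithin_le_nhds))
    have hxx : η x ^ 2 ≤ 0 + 4 * I * (x - α) := by
      refine ge_of_tendsto htend ?_
      filter_upwards [eventually_mem_set.2 (Ioo_mem_nhdsGT hx.1)] with y hy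
      exact key y hy
    linarith
  have hlow : ∀ x ∈ Ioo α b, I / 16 * (x - α)⁻¹ ≤ η' x ^ 2 := by
    intro x hx
    obtain ⟨⟨hF1, hF2⟩, hxmem⟩ := hgood x hx
    have hu2 := hup x hx
    have hs : 0 < x - α := sub_pos.2 hx.1
    have hηx := hη_pos x ⟨hx.1, hxmem.2.trans hx₀β⟩
    have hη'x := hη'_pos x hxmem
    have h4 : η x ^ 2 * η' x ^ 2 ≤ 4 * I * (x - α) * η' x ^ 2 :=
      mul_le_mul_of_nonneg_right hu2 (sq_nonneg _)
    have h6 : (I / 2) ^ 2 ≤ (η x * η' x) ^ 2 := by nlinarith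
    have hkey3 : I ≤ 16 * (η' x ^ 2 * (x - α)) := by
      have h7 : I * I ≤ 16 * (η' x ^ 2 * (x - α)) * I := by nlinarith
      exact le_of_mul_le_mul_right (by linarith) hIpos
    have e1 : 16 * (η' x ^ 2 * (x - α)) * (x - α)⁻¹ = 16 * η' x ^ 2 := by
      field_simp
    have hm := mul_le_mul_of_nonneg_right hkey3 (inv_nonneg.2 hs.le)
    rw [e1] at hm
    linarith
  have hInt2b : IntegrableOn (fun y => η' y ^ 2) (Ioo α b) :=
    hInt2.mono_set (Ioo_subset_Ioo_right hbx₀)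
  have hhInt : IntegrableOn (fun x => I / 16 * (x - α)⁻¹) (Ioo α b) := by
    apply Integrable.mono' hInt2b
    · apply ContinuousOn.aestronglyMeasurable ?_ measurableSet_Ioo
      exact continuousOn_const.mul ((continuousOn_id.sub continuousOn_const).inv₀
        (fun x hx => sub_ne_zero.2 (ne_of_gt hx.1)))
    · refine (ae_restrict_iff' measurableSet_Ioo).2 (ae_of_all _ fun x hx => ?_)
      have hs : 0 < x - α := sub_pos.2 hx.1
      rw [Real.norm_eq_abs, abs_of_nonneg (by positivity)]
      exact hlow x hx
  have hIne : I ≠ 0 := hIpos.ne'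
  have hInv : IntegrableOn (fun x : ℝ => (x - α)⁻¹) (Ioo α b) := by
    have h : IntegrableOn (fun x => 16 / I * (I / 16 * (x - α)⁻¹)) (Ioo α b) :=
      hhInt.const_mul (16 / I)
    refine h.congr_fun (fun x hx => ?_) measurableSet_Ioo
    have hs : x - α ≠ 0 := sub_ne_zero.2 hx.1.ne'
    field_simp
  have hInv2 : IntervalIntegrable (fun x : ℝ => (x - α)⁻¹) volume α b := by
    rw [intervalIntegrable_iff_integrableOn_Ioo_of_le hαb.le]; exact hInv
  have hInv3 := hInv2.comp_add_right α
  simp only [add_sub_cancel_right, sub_self] at hInv3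
  have hInv4 : IntegrableOn (fun x : ℝ => x⁻¹) (Ioo 0 (b - α)) := by
    rw [← intervalIntegrable_iff_integrableOn_Ioo_of_le (by linarith : (0:ℝ) ≤ b - α)]
    exact hInv3
  have hInv5 : IntegrableOn (fun x : ℝ => x ^ (-1 : ℝ)) (Ioo 0 (b - α)) := by
    refine hInv4.congr_fun (fun x hx => ?_) measurableSet_Ioo
    exact (Real.rpow_neg_one x).symm
  rw [intervalIntegral.integrableOn_Ioo_rpow_iff (by linarith : (0:ℝ) < b - α)] at hInv5
  norm_num at hInv5
end
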